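/- For γ > 1, θ = (γ-1)/2, and a left state u₋ = (ρ₋, ρ₋v₋) with ρ₋ > 0 and v₋ ≥ 0, there exists a state u₊ = (ρ₊, 0) with ρ₊ ≥ ρ₋ connected to u₋ by a 1-shock: i.e., there exist ρ₊ ≥ ρ₋ and shock speed σ such that the Rankine–Hugoniot conditions m₊ - m₋ = σ(ρ₊ - ρ₋) and (m₊²/ρ₊ + p(ρ₊)) - (m₋²/ρ₋ + p(ρ₋)) = σ(m₊ - m₋) hold with m₊ = 0, m₋ = ρ₋v₋, and p(ρ) = ρ^γ/γ. -/

import Mathlib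

theorem one_shock_to_rest_state
    (γ : ℝ) (hγ : 1 < γ)
    (p : ℝ → ℝ) (hp : ∀ ρ : ℝ, p ρ = ρ ^ γ / γ)
    (ρL vL : ℝ) (hρL : 0 < ρL) (hvL : 0 ≤ vL) :
    ∃ ρR σ : ℝ, ρL ≤ ρR ∧
      (0 : ℝ) - ρL * vL = σ * (ρR - ρL) ∧
      ((0 : ℝ) ^ 2 / ρR + p ρR) - ((ρL * vL) ^ 2 / ρL + p ρL) = σ * (0 - ρL * vL) := by
  rcases eq_or_lt_of_le hvL with h0 | hv
  · -- vL = 0 : trivial, take ρR = ρL, σ = 0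
    refine ⟨ρL, 0, le_refl _, by rw [← h0]; ring, ?_⟩
    rw [← h0]
    simp
  · -- vL > 0
    have hγ0 : (0:ℝ) < γ := by linarith
    set C : ℝ := ρL ^ γ / γ + ρL * vL ^ 2 with hC
    set D : ℝ := ρL ^ 2 * vL ^ 2 with hD
    have hCpos : 0 < C := by
      rw [hC]
      have h1 : 0 < ρL ^ γ := Real.rpow_pos_of_pos hρL γ
      have h2 : 0 < ρL * vL ^ 2 := by positivity
      have : 0 < ρL ^ γ / γ := div_pos h1 hγ0
      linarith
    have hDpos : 0 < D := by positivity
    set E : ℝ := (ρL + 1) ^ γ / γ + 1 with hE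
    have hEpos : 0 < E := by
      rw [hE]
      have h1 : 0 < (ρL + 1) ^ γ := Real.rpow_pos_of_pos (by linarith) γ
      have : 0 < (ρL + 1) ^ γ / γ := div_pos h1 hγ0
      linarith
    set δ : ℝ := min 1 (D / E) with hδ
    have hδpos : 0 < δ := lt_min one_pos (div_pos hDpos hEpos)
    have hδ1 : δ ≤ 1 := min_le_left _ _
    have hδE : E ≤ D / δ := by
      have h1 : δ ≤ D / E := min_le_right _ _
      rw [le_div_iff₀ hδpos]
      calc E * δ ≤ E * (D / E) := by
            exact mul_le_mul_of_nonneg_left h1 hEpos.le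
        _ = D := by field_simp
    set a : ℝ := ρL + δ with ha
    set b : ℝ := max (ρL + 1) (γ * (C + D) + 1) with hb
    have hab1 : a ≤ ρL + 1 := by simp [ha]; linarith
    have haρ : ρL < a := by simp [ha]; linarith
    have hbge : ρL + 1 ≤ b := le_max_left _ _
    have hab : a ≤ b := hab1.trans hbge
    set f : ℝ → ℝ := fun x => x ^ γ / γ - C - D / (x - ρL) with hf
    clear_value C D E δ a b f
    have hfa : f a ≤ 0 := by
      have h1 : a ^ γ ≤ (ρL + 1) ^ γ :=
        Real.rpow_le_rpow (by linarith) hab1 hγ0.le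
      have h2 : E ≤ D / (a - ρL) := by
        have : a - ρL = δ := by rw [ha]; ring
        rw [this]; exact hδE
      have h3 : a ^ γ / γ ≤ (ρL + 1) ^ γ / γ := (div_le_div_iff_of_pos_right hγ0).mpr h1
      simp only [hf]
      have : (ρL + 1) ^ γ / γ = E - 1 := by rw [hE]; ring
      nlinarith
    have hfb : 0 ≤ f b := by
      have hb1 : (1:ℝ) ≤ b := by linarith
      have h1 : b ≤ b ^ γ := by
        calc b = b ^ (1:ℝ) := (Real.rpow_one b).symm
          _ ≤ b ^ γ := Real.rpow_le_rpow_of_exponent_le hb1 hγ.le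
      have h2 : γ * (C + D) + 1 ≤ b := by rw [hb]; exact le_max_right _ _
      have h3 : D / (b - ρL) ≤ D := by
        rw [div_le_iff₀ (by linarith)]
        nlinarith
      have h4 : C + D ≤ b / γ := by
        rw [le_div_iff₀ hγ0]
        nlinarith
      simp only [hf]
      have h5 : b / γ ≤ b ^ γ / γ := (div_le_div_iff_of_pos_right hγ0).mpr h1
      linarith
    have hcont : ContinuousOn f (Set.Icc a b) := by
      rw [hf]
      apply ContinuousOn.sub
      · apply ContinuousOn.sub
        · exact (ContinuousOn.rpow_const continuousOn_id
            (fun x _ => Or.inr hγ0.le)).div_const γ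
        · exact continuousOn_const
      · apply ContinuousOn.div continuousOn_const
          ((continuousOn_id).sub continuousOn_const)
        intro x hx
        have : ρL < x := lt_of_lt_of_le haρ hx.1
        exact sub_ne_zero.mpr (ne_of_gt this)
    have hmem : (0:ℝ) ∈ Set.Icc (f a) (f b) := ⟨hfa, hfb⟩
    obtain ⟨x, hx, hfx⟩ := intermediate_value_Icc hab hcont hmem
    have hxρ : ρL < x := lt_of_lt_of_le haρ hx.1
    have hxne : x - ρL ≠ 0 := sub_ne_zero.mpr (ne_of_gt hxρ)
    refine ⟨x, -(ρL * vL) / (x - ρL), le_of_lt hxρ, ?_, ?_⟩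
    · field_simp; ring
    · have hpx : x ^ γ / γ = C + D / (x - ρL) := by
        have := hfx
        simp only [hf] at this
        linarith
      rw [hp x, hp ρL, hpx]
      have hL : (ρL * vL) ^ 2 / ρL = ρL * vL ^ 2 := by
        field_simp
      rw [hL, hC]
      field_simp
      rw [hD]
      ring
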